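/- Let q ≠ 0 be complex, T the matrix with rows (q, q(q-1), 1-q), (0,0,1), (0,q²,0), A₁ with rows (1,0,0),(0,0,1),(0,1,0), A₂ with rows (0,1,0),(1,0,0),(0,0,1). Then for every nonnegative integer k, the (2,2) entry of (A₁A₂T)^(2k+1)·T^(-(2k+1)) is 0; in particular (A₁A₂T)^(2k+1)T^(-(2k+1)) ≠ I₃. -/

import Mathlib

open Matrix

theorem lk_alpha12T_odd (q : ℂ) (hq : q ≠ 0) (k : ℕ) :
    let T : Matrix (Fin 3) (Fin 3) ℂ := !![q, q*(q-1), 1-q; 0, 0, 1; 0, q^2, 0]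
    let A₁ : Matrix (Fin 3) (Fin 3) ℂ := !![1, 0, 0; 0, 0, 1; 0, 1, 0]
    let A₂ : Matrix (Fin 3) (Fin 3) ℂ := !![0, 1, 0; 1, 0, 0; 0, 0, 1]
    ((A₁ * A₂ * T) ^ (2*k+1) * T ^ (-(2*(k:ℤ)+1))) 1 1 = 0 ∧
    (A₁ * A₂ * T) ^ (2*k+1) * T ^ (-(2*(k:ℤ)+1)) ≠ 1 := by
  intro T A₁ A₂
  have hdet : T.det = -q^3 := by
    simp [T, Matrix.det_fin_three, Matrix.vecHead, Matrix.vecTail]; ring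
  have hu : IsUnit T.det := by
    rw [hdet]
    exact (neg_ne_zero.mpr (pow_ne_zero 3 hq)).isUnit
  -- explicit inverse of T
  have hTi : T⁻¹ = !![1/q, (q-1)/q, (1-q)/q^2; 0, 0, 1/q^2; 0, 1, 0] := by
    apply Matrix.inv_eq_right_inv
    ext i j
    fin_cases i <;> fin_cases j <;>
      simp [T, Matrix.mul_apply, Fin.sum_univ_three, Matrix.vecHead,
        Matrix.vecTail, Matrix.one_apply, Fin.ext_iff] <;> field_simp <;> ring
  have hTinv11 : T⁻¹ 1 1 = 0 := by rw [hTi]; norm_num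
  -- M = A₁ * A₂ * T explicitly
  have hM : A₁ * A₂ * T = !![0,0,1; 0,q^2,0; q, q*(q-1), 1-q] := by
    ext i j
    fin_cases i <;> fin_cases j <;>
      simp [T, A₁, A₂, Matrix.mul_apply, Fin.sum_univ_three, Matrix.vecHead,
        Matrix.vecTail]
  have m0 : (A₁ * A₂ * T) 1 0 = 0 := by rw [hM]; norm_num
  have m1 : (A₁ * A₂ * T) 1 1 = q^2 := by rw [hM]; norm_num
  have m2 : (A₁ * A₂ * T) 1 2 = 0 := by rw [hM]; norm_num; rfl
  -- row 1 of M^n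
  have hMrow : ∀ n : ℕ, ∀ j, ((A₁ * A₂ * T) ^ n) 1 j
      = q^(2*n) * (1 : Matrix (Fin 3) (Fin 3) ℂ) 1 j := by
    intro n
    induction n with
    | zero => intro j; simp
    | succ n ih =>
      intro j
      rw [pow_succ', Matrix.mul_apply, Fin.sum_univ_three, m0, m1, m2, ih j]
      ring
  -- row 1 of T^(2n)
  have hT2 : T ^ 2 = T * T := sq T
  have e0 : (T ^ 2) 1 0 = 0 := by
    rw [hT2]; simp [T, Matrix.mul_apply, Fin.sum_univ_three, Matrix.vecHead, Matrix.vecTail]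
  have e1 : (T ^ 2) 1 1 = q^2 := by
    rw [hT2]; simp [T, Matrix.mul_apply, Fin.sum_univ_three, Matrix.vecHead, Matrix.vecTail]
  have e2 : (T ^ 2) 1 2 = 0 := by
    rw [hT2]; simp [T, Matrix.mul_apply, Fin.sum_univ_three, Matrix.vecHead, Matrix.vecTail]
  have hTrow : ∀ n : ℕ, ∀ j, (T ^ (2*n)) 1 j
      = q^(2*n) * (1 : Matrix (Fin 3) (Fin 3) ℂ) 1 j := by
    intro n
    induction n with
    | zero => intro j; simp
    | succ n ih =>
      intro j
      have h2 : 2 * (n+1) = 2 + 2*n := by ring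
      rw [h2, pow_add, Matrix.mul_apply, Fin.sum_univ_three, e0, e1, e2, ih j]
      ring
  set B := T ^ (-(2*(k:ℤ)+1)) with hB
  -- key : T ^ (2*k) * B = T⁻¹
  have key : T ^ (2*k) * B = T⁻¹ := by
    have h1 : T ^ (2*k) = T ^ ((2*k : ℕ) : ℤ) := (zpow_natCast T (2*k)).symm
    rw [h1, hB, ← Matrix.zpow_add hu]
    have : ((2*k : ℕ) : ℤ) + (-(2*(k:ℤ)+1)) = -1 := by push_cast; ring
    rw [this, Matrix.zpow_neg_one]
  have o0 : (1 : Matrix (Fin 3) (Fin 3) ℂ) 1 0 = 0 := by simp [Matrix.one_apply]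
  have o1 : (1 : Matrix (Fin 3) (Fin 3) ℂ) 1 1 = 1 := by simp [Matrix.one_apply]
  have o2 : (1 : Matrix (Fin 3) (Fin 3) ℂ) 1 2 = 0 := by simp [Matrix.one_apply]
  have hB11 : B 1 1 = 0 := by
    have h := congrArg (fun X => X 1 1) key
    beta_reduce at h
    rw [Matrix.mul_apply, Fin.sum_univ_three, hTrow k 0, hTrow k 1, hTrow k 2,
      o0, o1, o2, hTinv11] at h
    have h' : q^(2*k) * B 1 1 = 0 := by linear_combination h
    exact (mul_eq_zero.mp h').resolve_left (pow_ne_zero _ hq)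
  have hmain : ((A₁ * A₂ * T) ^ (2*k+1) * B) 1 1 = 0 := by
    rw [Matrix.mul_apply, Fin.sum_univ_three, hMrow (2*k+1) 0, hMrow (2*k+1) 1,
      hMrow (2*k+1) 2, o0, o1, o2, hB11]
    ring
  refine ⟨hmain, ?_⟩
  intro h
  have h11 := congrArg (fun X => X 1 1) h
  beta_reduce at h11
  rw [hmain, o1] at h11
  exact zero_ne_one h11
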